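/- arXiv:2210.03214 — 7 statements merged into one kernel-verified Lean document; each statement's English description precedes it below -/
import Mathlib

section
/- Let Δ ⊆ ℝ^n be a nonempty closed convex set, Ψ : ℝ^n → ℝ differentiable and σ_Ψ-strongly convex on Δ (i.e., D_Ψ(x,y) ≥ (σ_Ψ/2)‖x−y‖² on Δ, with D_Ψ(x,y) = Ψ(x) − Ψ(y) − ⟨∇Ψ(y), x−y⟩), and A > 0, B ≥ 0, φ* ≥ 0 constants. Let μ* ∈ Δ and let (μ^t)_{t≥1} ⊆ Δ, (ℓ^t)_{t≥1} ⊆ ℝ^n, and real numbers (φ^t)_{t≥1} with φ^t ≥ 0 satisfy for each t: (a) ‖ℓ^t‖² ≤ A φ^t + B; (b) ⟨μ* − μ^t, ℓ^t⟩ ≤ φ* − φ^t; (c) μ^{t+1} satisfies ⟨η_t ℓ^t + ∇Ψ(μ^{t+1}) − ∇Ψ(μ^t), μ^{t+1} − ν⟩ ≤ 0 for all ν ∈ Δ, where the step sizes satisfy 0 < η_{t+1} ≤ η_t ≤ σ_Ψ/(2A). Let a† ≥ D_Ψ(μ*, μ^1) and C₁ = φ* + B/A. Then for every t ≥ 1: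 D_Ψ(μ*, μ^{t+1}) − D_Ψ(μ*, μ^t) ≤ η_t C₁, and consequently ‖μ^{t+1} − μ*‖² ≤ (2/σ_Ψ)(C₁ Σ_{k=1}^t η_k + a†). -/
open scoped RealInnerProductSpace

/-- First part of Lemma 2 of the paper: deterministic distance bound for
post-attack mirror-descent iterates,
`D_Ψ(μ*, μ^{t+1}) − D_Ψ(μ*, μ^t) ≤ η_t C₁` and
`‖μ^{t+1} − μ*‖² ≤ (2/σ_Ψ)(C₁ Σ_{k=1}^t η_k + a†)`. -/
theorem md_post_attack_distance_bound
    {n : ℕ}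
    (Δ : Set (EuclideanSpace ℝ (Fin n)))
    (hΔne : Δ.Nonempty) (hΔclosed : IsClosed Δ) (hΔconv : Convex ℝ Δ)
    (Ψ : EuclideanSpace ℝ (Fin n) → ℝ)
    (gΨ : EuclideanSpace ℝ (Fin n) → EuclideanSpace ℝ (Fin n))
    (hΨ : ∀ x, HasGradientAt Ψ (gΨ x) x)
    (D : EuclideanSpace ℝ (Fin n) → EuclideanSpace ℝ (Fin n) → ℝ)
    (hD : ∀ x y, D x y = Ψ x - Ψ y - ⟪gΨ y, x - y⟫)
    (σΨ : ℝ) (hσΨ : 0 < σΨ)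
    (hstrong : ∀ x ∈ Δ, ∀ y ∈ Δ, σΨ / 2 * ‖x - y‖ ^ 2 ≤ D x y)
    (A B φstar : ℝ) (hA : 0 < A) (hB : 0 ≤ B) (hφstar : 0 ≤ φstar)
    (μstar : EuclideanSpace ℝ (Fin n)) (hμstar : μstar ∈ Δ)
    (μ : ℕ → EuclideanSpace ℝ (Fin n)) (ℓ : ℕ → EuclideanSpace ℝ (Fin n))
    (φ : ℕ → ℝ) (η : ℕ → ℝ)
    (hμΔ : ∀ t ≥ 1, μ t ∈ Δ)
    (hφpos : ∀ t ≥ 1, 0 ≤ φ t)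
    (hgrowth : ∀ t ≥ 1, ‖ℓ t‖ ^ 2 ≤ A * φ t + B)
    (hconvx : ∀ t ≥ 1, ⟪μstar - μ t, ℓ t⟫ ≤ φstar - φ t)
    (hopt : ∀ t ≥ 1, ∀ ν ∈ Δ,
      ⟪η t • ℓ t + gΨ (μ (t + 1)) - gΨ (μ t), μ (t + 1) - ν⟫ ≤ 0)
    (hηpos : ∀ t ≥ 1, 0 < η t)
    (hηdec : ∀ t ≥ 1, η (t + 1) ≤ η t)
    (hηle : ∀ t ≥ 1, η t ≤ σΨ / (2 * A))
    (adag : ℝ) (hadag : D μstar (μ 1) ≤ adag)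
    (C₁ : ℝ) (hC₁ : C₁ = φstar + B / A) :
    ∀ t ≥ 1,
      D μstar (μ (t + 1)) - D μstar (μ t) ≤ η t * C₁ ∧
      ‖μ (t + 1) - μstar‖ ^ 2 ≤ 2 / σΨ * (C₁ * ∑ k ∈ Finset.Icc 1 t, η k + adag) := by
  -- per-step bound
  have step : ∀ t ≥ 1, D μstar (μ (t + 1)) - D μstar (μ t) ≤ η t * C₁ := by
    intro t ht
    have hμt := hμΔ t ht
    have hμt1 := hμΔ (t + 1) (le_trans ht (Nat.le_succ t))
    -- three point identity
    have key : D μstar (μ (t + 1)) - D μstar (μ t) + D (μ (t + 1)) (μ t)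
        = ⟪gΨ (μ (t + 1)) - gΨ (μ t), μ (t + 1) - μstar⟫ := by
      simp only [hD, inner_sub_left, inner_sub_right]
      ring
    have h1 := hopt t ht μstar hμstar
    rw [show η t • ℓ t + gΨ (μ (t + 1)) - gΨ (μ t)
        = η t • ℓ t + (gΨ (μ (t + 1)) - gΨ (μ t)) by abel] at h1
    rw [inner_add_left, real_inner_smul_left] at h1
    -- split the inner product
    have hsplit : ⟪ℓ t, μ (t + 1) - μstar⟫
        = ⟪ℓ t, μ (t + 1) - μ t⟫ - ⟪μstar - μ t, ℓ t⟫ := by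
      have hc : ⟪μstar - μ t, ℓ t⟫ = ⟪ℓ t, μstar - μ t⟫ := real_inner_comm _ _
      rw [hc]
      simp only [inner_sub_right]
      ring
    have hcs : -⟪ℓ t, μ (t + 1) - μ t⟫ ≤ ‖ℓ t‖ * ‖μ (t + 1) - μ t‖ := by
      have h0 := real_inner_le_norm (ℓ t) (μ t - μ (t + 1))
      have h2 : ⟪ℓ t, μ t - μ (t + 1)⟫ = -⟪ℓ t, μ (t + 1) - μ t⟫ := by
        simp only [inner_sub_right]; ring
      rw [h2, norm_sub_rev] at h0
      exact h0
    have hstr := hstrong (μ (t + 1)) hμt1 (μ t) hμt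
    have hcx := hconvx t ht
    have hgr := hgrowth t ht
    have hφ := hφpos t ht
    have hηp := hηpos t ht
    have hη2A : η t * (2 * A) ≤ σΨ := (le_div_iff₀ (by positivity)).mp (hηle t ht)
    set L := ‖ℓ t‖ with hL
    set dn := ‖μ (t + 1) - μ t‖ with hdn
    have hLpos : 0 ≤ L := norm_nonneg _
    have hdnpos : 0 ≤ dn := norm_nonneg _
    have hmain : D μstar (μ (t + 1)) - D μstar (μ t)
        ≤ η t * (φstar - φ t) + η t * (L * dn) - σΨ / 2 * dn ^ 2 := by
      nlinarith [mul_le_mul_of_nonneg_left hcx hηp.le,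
        mul_le_mul_of_nonneg_left hcs hηp.le]
    have hamgm : η t * (L * dn) - σΨ / 2 * dn ^ 2 ≤ η t ^ 2 * L ^ 2 / (2 * σΨ) := by
      rw [le_div_iff₀ (by positivity)]
      nlinarith [sq_nonneg (η t * L - σΨ * dn)]
    have hpos1 : 0 ≤ η t * (A * φ t + B) := by positivity
    have hkey2 : A * (η t ^ 2 * L ^ 2 / (2 * σΨ)) ≤ η t * (A * φ t + B) := by
      rw [show A * (η t ^ 2 * L ^ 2 / (2 * σΨ)) = A * (η t ^ 2 * L ^ 2) / (2 * σΨ) by ring,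
        div_le_iff₀ (by positivity)]
      nlinarith [mul_le_mul_of_nonneg_left hgr (mul_nonneg hA.le (sq_nonneg (η t))),
        mul_le_mul_of_nonneg_right hη2A hpos1]
    have hd : D μstar (μ (t + 1)) - D μstar (μ t)
        ≤ η t * (φstar - φ t) + η t ^ 2 * L ^ 2 / (2 * σΨ) := by linarith
    have hAd := mul_le_mul_of_nonneg_left hd hA.le
    have hC1A : A * (η t * C₁) = η t * (A * φstar + B) := by
      rw [hC₁, mul_comm A, mul_assoc, add_mul, div_mul_cancel₀ _ hA.ne', mul_comm φstar A]
    refine le_of_mul_le_mul_left ?_ hA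
    linarith [hAd, hkey2, hC1A, mul_nonneg (mul_nonneg hA.le hηp.le) hφ]
  intro t ht
  refine ⟨step t ht, ?_⟩
  -- telescoping bound on D
  have tele : ∀ t ≥ 1, D μstar (μ (t + 1)) ≤ C₁ * ∑ k ∈ Finset.Icc 1 t, η k + adag := by
    intro t ht
    induction t with
    | zero => omega
    | succ s ih =>
      rcases Nat.eq_or_lt_of_le ht with h1 | h1
      · have : s = 0 := by omega
        subst this
        simp only [Finset.Icc_self, Finset.sum_singleton]
        have := step 1 le_rfl
        linarith [this, hadag]
      · have hs : 1 ≤ s := by omega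
        rw [Finset.sum_Icc_succ_top (by omega : 1 ≤ s + 1)]
        linarith [step (s + 1) (by omega : s + 1 ≥ 1), ih hs]
  have hD1 := tele t ht
  have hstr := hstrong μstar hμstar (μ (t + 1)) (hμΔ (t + 1) (by omega))
  rw [norm_sub_rev] at hstr
  have h2σ : 0 < 2 / σΨ := by positivity
  have hone : 2 / σΨ * (σΨ / 2) = 1 := by field_simp
  calc ‖μ (t + 1) - μstar‖ ^ 2
      = 2 / σΨ * (σΨ / 2 * ‖μ (t + 1) - μstar‖ ^ 2) := by rw [← mul_assoc, hone, one_mul]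
    _ ≤ 2 / σΨ * (C₁ * ∑ k ∈ Finset.Icc 1 t, η k + adag) :=
        mul_le_mul_of_nonneg_left (le_trans hstr hD1) h2σ.le
end

section
/- Under the same hypotheses as follows—Δ ⊆ ℝ^n nonempty closed convex; Ψ : ℝ^n → ℝ differentiable and σ_Ψ-strongly convex on Δ (D_Ψ(x,y) ≥ (σ_Ψ/2)‖x−y‖² with D_Ψ(x,y) = Ψ(x) − Ψ(y) − ⟨∇Ψ(y), x−y⟩); constants A > 0, B ≥ 0, φ* ≥ 0; μ* ∈ Δ; sequences (μ^t) ⊆ Δ, (ℓ^t) ⊆ ℝ^n, (φ^t) with φ^t ≥ 0 satisfying ‖ℓ^t‖² ≤ A φ^t + B, ⟨μ* − μ^t, ℓ^t⟩ ≤ φ* − φ^t, and the mirror-step optimality ⟨η_t ℓ^t + ∇Ψ(μ^{t+1}) − ∇Ψ(μ^t), μ^{t+1} − ν⟩ ≤ 0 for all ν ∈ Δ; non-increasing step sizes 0 < η_{t+1} ≤ η_t ≤ σ_Ψ/(2A); a† ≥ D_Ψ(μ*, μ^1); C₁ = φ* + B/A—one has for every t ≥ 1 the weighted potential bound: Σ_{k=1}^t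 η_k² φ^k ≤ 2 (C₁ Σ_{k=1}^t η_k² + η_1 a†). -/
open scoped RealInnerProductSpace

set_option maxHeartbeats 1000000 in
/-- Second part of Lemma 2 of the paper: weighted potential bound along the
post-attack mirror-descent trajectory,
`Σ_{k=1}^t η_k² φ^k ≤ 2 (C₁ Σ_{k=1}^t η_k² + η_1 a†)`. -/
theorem md_post_attack_weighted_potential_bound
    {n : ℕ}
    (Δ : Set (EuclideanSpace ℝ (Fin n)))
    (hΔne : Δ.Nonempty) (hΔclosed : IsClosed Δ) (hΔconv : Convex ℝ Δ)
    (Ψ : EuclideanSpace ℝ (Fin n) → ℝ)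
    (gΨ : EuclideanSpace ℝ (Fin n) → EuclideanSpace ℝ (Fin n))
    (hΨ : ∀ x, HasGradientAt Ψ (gΨ x) x)
    (D : EuclideanSpace ℝ (Fin n) → EuclideanSpace ℝ (Fin n) → ℝ)
    (hD : ∀ x y, D x y = Ψ x - Ψ y - ⟪gΨ y, x - y⟫)
    (σΨ : ℝ) (hσΨ : 0 < σΨ)
    (hstrong : ∀ x ∈ Δ, ∀ y ∈ Δ, σΨ / 2 * ‖x - y‖ ^ 2 ≤ D x y)
    (A B φstar : ℝ) (hA : 0 < A) (hB : 0 ≤ B) (hφstar : 0 ≤ φstar)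
    (μstar : EuclideanSpace ℝ (Fin n)) (hμstar : μstar ∈ Δ)
    (μ : ℕ → EuclideanSpace ℝ (Fin n)) (ℓ : ℕ → EuclideanSpace ℝ (Fin n))
    (φ : ℕ → ℝ) (η : ℕ → ℝ)
    (hμΔ : ∀ t ≥ 1, μ t ∈ Δ)
    (hφpos : ∀ t ≥ 1, 0 ≤ φ t)
    (hgrowth : ∀ t ≥ 1, ‖ℓ t‖ ^ 2 ≤ A * φ t + B)
    (hconvx : ∀ t ≥ 1, ⟪μstar - μ t, ℓ t⟫ ≤ φstar - φ t)
    (hopt : ∀ t ≥ 1, ∀ ν ∈ Δ,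
      ⟪η t • ℓ t + gΨ (μ (t + 1)) - gΨ (μ t), μ (t + 1) - ν⟫ ≤ 0)
    (hηpos : ∀ t ≥ 1, 0 < η t)
    (hηdec : ∀ t ≥ 1, η (t + 1) ≤ η t)
    (hηle : ∀ t ≥ 1, η t ≤ σΨ / (2 * A))
    (adag : ℝ) (hadag : D μstar (μ 1) ≤ adag)
    (C₁ : ℝ) (hC₁ : C₁ = φstar + B / A) :
    ∀ t ≥ 1,
      ∑ k ∈ Finset.Icc 1 t, η k ^ 2 * φ k ≤
        2 * (C₁ * ∑ k ∈ Finset.Icc 1 t, η k ^ 2 + η 1 * adag) := by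
  have hDnn : ∀ t ≥ 1, 0 ≤ D μstar (μ t) := by
    intro t ht
    have h := hstrong μstar hμstar (μ t) (hμΔ t ht)
    nlinarith [sq_nonneg ‖μstar - μ t‖]
  have hadag0 : 0 ≤ adag := le_trans (hDnn 1 le_rfl) hadag
  obtain ⟨c, hc_def⟩ : ∃ c : ℝ, c = B / (4 * A) := ⟨_, rfl⟩
  have hc0 : 0 ≤ c := by rw [hc_def]; positivity
  have hcB : B = 4 * A * c := by
    rw [hc_def]; field_simp
  -- key per-step inequality
  have key : ∀ t ≥ 1, 3/4 * (η t ^ 2 * φ t) ≤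
      η t ^ 2 * (φstar + c)
        + η t * (D μstar (μ t) - D μstar (μ (t+1))) := by
    intro t ht
    have hη := hηpos t ht
    have hηA : η t * (2 * A) ≤ σΨ := by
      have h := hηle t ht
      rwa [le_div_iff₀ (by linarith)] at h
    have hφt := hφpos t ht
    have hxΔ := hμΔ t ht
    have hyΔ := hμΔ (t+1) (by omega)
    have h1 : ⟪η t • ℓ t + gΨ (μ (t + 1)) - gΨ (μ t), μ (t + 1) - μstar⟫ ≤ 0 :=
      hopt t ht μstar hμstar
    have h1' : η t * ⟪ℓ t, μ (t+1) - μstar⟫ ≤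
        ⟪gΨ (μ t) - gΨ (μ (t+1)), μ (t+1) - μstar⟫ := by
      have heq : ⟪η t • ℓ t + gΨ (μ (t + 1)) - gΨ (μ t), μ (t + 1) - μstar⟫
          = η t * ⟪ℓ t, μ (t+1) - μstar⟫
            - ⟪gΨ (μ t) - gΨ (μ (t+1)), μ (t+1) - μstar⟫ := by
        simp only [inner_sub_left, inner_add_left, real_inner_smul_left]
        ring
      linarith [heq ▸ h1]
    have h3 : ⟪gΨ (μ t) - gΨ (μ (t+1)), μ (t+1) - μstar⟫
        = D μstar (μ t) - D μstar (μ (t+1)) - D (μ (t+1)) (μ t) := by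
      rw [hD, hD, hD]
      simp only [inner_sub_left, inner_sub_right]
      ring
    have h4 : σΨ / 2 * ‖μ (t+1) - μ t‖ ^ 2 ≤ D (μ (t+1)) (μ t) :=
      hstrong _ hyΔ _ hxΔ
    have h5 : ⟪ℓ t, μ t - μ (t+1)⟫ ≤ ‖ℓ t‖ * ‖μ (t+1) - μ t‖ := by
      have h := real_inner_le_norm (ℓ t) (μ t - μ (t+1))
      have heq : ‖μ t - μ (t+1)‖ = ‖μ (t+1) - μ t‖ := norm_sub_rev _ _
      linarith [heq ▸ h]
    have h6 : φ t - φstar ≤ ⟪ℓ t, μ t - μstar⟫ := by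
      have h := hconvx t ht
      have heq : ⟪μstar - μ t, ℓ t⟫ = - ⟪ℓ t, μ t - μstar⟫ := by
        rw [real_inner_comm]
        simp only [inner_sub_right]
        ring
      linarith [heq ▸ h]
    have hsplit : ⟪ℓ t, μ t - μstar⟫
        = ⟪ℓ t, μ (t+1) - μstar⟫ + ⟪ℓ t, μ t - μ (t+1)⟫ := by
      simp only [inner_sub_right]
      ring
    have h1'' : η t * ⟪ℓ t, μ (t+1) - μstar⟫ ≤
        D μstar (μ t) - D μstar (μ (t+1)) - D (μ (t+1)) (μ t) := h3 ▸ h1'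
    -- linear combination before AM-GM
    have hlin : η t * (φ t - φstar) ≤
        D μstar (μ t) - D μstar (μ (t+1)) - D (μ (t+1)) (μ t)
          + η t * (‖ℓ t‖ * ‖μ (t+1) - μ t‖) := by
      have hmul : η t * (φ t - φstar) ≤ η t * ⟪ℓ t, μ t - μstar⟫ :=
        mul_le_mul_of_nonneg_left h6 (le_of_lt hη)
      have hmul2 : η t * ⟪ℓ t, μ t - μ (t+1)⟫ ≤ η t * (‖ℓ t‖ * ‖μ (t+1) - μ t‖) :=
        mul_le_mul_of_nonneg_left h5 (le_of_lt hη)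
      have hs : η t * ⟪ℓ t, μ t - μstar⟫
          = η t * ⟪ℓ t, μ (t+1) - μstar⟫ + η t * ⟪ℓ t, μ t - μ (t+1)⟫ := by
        rw [hsplit]; ring
      linarith [hs ▸ hmul]
    have hσnn : (0:ℝ) ≤ 2 * σΨ := by linarith
    have hlin2 := mul_le_mul_of_nonneg_left hlin hσnn
    have h4' := mul_le_mul_of_nonneg_left h4 hσnn
    -- AM-GM
    have hAG : 2 * σΨ * (η t * (‖ℓ t‖ * ‖μ (t+1) - μ t‖))
        - 2 * σΨ * (σΨ / 2 * ‖μ (t+1) - μ t‖ ^ 2) ≤ η t ^ 2 * ‖ℓ t‖ ^ 2 := by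
      nlinarith [sq_nonneg (σΨ * ‖μ (t+1) - μ t‖ - η t * ‖ℓ t‖)]
    have h7 : 2 * σΨ * (η t * (φ t - φstar)) ≤
        2 * σΨ * (D μstar (μ t) - D μstar (μ (t+1))) + η t ^ 2 * ‖ℓ t‖ ^ 2 := by
      nlinarith [hlin2, h4', hAG]
    have hg := hgrowth t ht
    have hgm := mul_le_mul_of_nonneg_left hg (sq_nonneg (η t))
    have h7' : 2 * σΨ * (η t * (φ t - φstar)) ≤
        2 * σΨ * (D μstar (μ t) - D μstar (μ (t+1))) + η t ^ 2 * (A * φ t + B) := by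
      linarith
    rw [hcB] at h7'
    have H := mul_le_mul_of_nonneg_left h7' (le_of_lt hη)
    have f1 : 0 ≤ (σΨ - 2 * A * η t) * (η t ^ 2 * φ t) :=
      mul_nonneg (by linarith) (mul_nonneg (sq_nonneg _) hφt)
    have f2 : 0 ≤ (σΨ - 2 * A * η t) * (η t ^ 2 * c) :=
      mul_nonneg (by linarith) (mul_nonneg (sq_nonneg _) hc0)
    have hgoal2 : 2 * σΨ * (3/4 * (η t ^ 2 * φ t)) ≤
        2 * σΨ * (η t ^ 2 * (φstar + c)
          + η t * (D μstar (μ t) - D μstar (μ (t+1)))) := by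
      nlinarith [H, f1, f2]
    exact le_of_mul_le_mul_left hgoal2 (by linarith)
  -- telescoping bound
  have tele : ∀ t ≥ 1,
      ∑ k ∈ Finset.Icc 1 t, η k * (D μstar (μ k) - D μstar (μ (k+1)))
        ≤ η 1 * adag - η t * D μstar (μ (t+1)) := by
    intro t ht
    induction t, ht using Nat.le_induction with
    | base =>
      simp only [Finset.Icc_self, Finset.sum_singleton]
      have hη1 := hηpos 1 le_rfl
      have := mul_le_mul_of_nonneg_left hadag (le_of_lt hη1)
      linarith
    | succ t ht ih =>
      rw [Finset.sum_Icc_succ_top (by omega : 1 ≤ t + 1)]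
      have h1 : η (t+1) ≤ η t := hηdec t ht
      have h2 : 0 ≤ D μstar (μ (t+1)) := hDnn (t+1) (by omega)
      have h3 : η (t+1) * D μstar (μ (t+1)) ≤ η t * D μstar (μ (t+1)) :=
        mul_le_mul_of_nonneg_right h1 h2
      linarith
  intro t ht
  have hsum : ∑ k ∈ Finset.Icc 1 t, (3/4 * (η k ^ 2 * φ k)) ≤
      ∑ k ∈ Finset.Icc 1 t,
        (η k ^ 2 * (φstar + c) + η k * (D μstar (μ k) - D μstar (μ (k+1)))) := by
    apply Finset.sum_le_sum
    intro k hk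
    exact key k (Finset.mem_Icc.mp hk).1
  rw [Finset.sum_add_distrib, ← Finset.mul_sum, ← Finset.sum_mul] at hsum
  have htele := tele t ht
  have hSnn : 0 ≤ ∑ k ∈ Finset.Icc 1 t, η k ^ 2 :=
    Finset.sum_nonneg fun k _ => sq_nonneg _
  have hη1 := hηpos 1 le_rfl
  have hηt := hηpos t ht
  have hDt : 0 ≤ D μstar (μ (t+1)) := hDnn (t+1) (by omega)
  have hBA : B / A = 4 * c := by
    rw [hc_def]; field_simp
  rw [hC₁, hBA]
  nlinarith [hsum, htele,
    mul_nonneg hφstar hSnn, mul_nonneg hc0 hSnn,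
    mul_nonneg (le_of_lt hη1) hadag0, mul_nonneg (le_of_lt hηt) hDt]
end

section
/- Under the same hypotheses as follows—Δ ⊆ ℝ^n nonempty closed convex; Ψ : ℝ^n → ℝ differentiable and σ_Ψ-strongly convex on Δ (D_Ψ(x,y) ≥ (σ_Ψ/2)‖x−y‖² with D_Ψ(x,y) = Ψ(x) − Ψ(y) − ⟨∇Ψ(y), x−y⟩); constants A > 0, B ≥ 0, φ* ≥ 0; μ* ∈ Δ; sequences (μ^t) ⊆ Δ, (ℓ^t) ⊆ ℝ^n, (φ^t) with φ^t ≥ 0 satisfying ‖ℓ^t‖² ≤ A φ^t + B, ⟨μ* − μ^t, ℓ^t⟩ ≤ φ* − φ^t, and the mirror-step optimality ⟨η_t ℓ^t + ∇Ψ(μ^{t+1}) − ∇Ψ(μ^t), μ^{t+1} − ν⟩ ≤ 0 for all ν ∈ Δ; non-increasing step sizes 0 < η_{t+1} ≤ η_t ≤ σ_Ψ/(2A); a† ≥ D_Ψ(μ*, μ^1); C₁ = φ* + B/A—one has for every t ≥ 1 the unweighted potential bound: Σ_{k=1}^t φ^k ≤ 2 ( C₁ t + (C₁ Σ_{k=1}^t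 η_k + a†) / η_t + a† / η_1 ). -/
open scoped RealInnerProductSpace

lemma md_aux_combine (A σ e p q L c d da B : ℝ)
    (hσ : 0 < σ) (hA : 0 < A) (he : 0 < e) (hB : 0 ≤ B) (hp : 0 ≤ p)
    (hch1 : e*(p - q) ≤ (da - d) + e*(L*c))
    (hch2 : 2*σ*(e*(L*c)) ≤ e^2*L^2 + 2*σ*d)
    (hgr : L^2 ≤ A*p + B)
    (hηA : 2*A*e ≤ σ) :
    3*(A*σ)*(e*p) ≤ 4*(A*σ)*(e*q) + 4*(A*σ)*da + σ*(e*B) := by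
  have hx1 : (0:ℝ) ≤ 2*A*e^2 := by positivity
  have hx2 : (0:ℝ) ≤ e * (A * p + B) := by positivity
  have hA' : 2*σ*(e*(p - q)) ≤ 2*σ*(da - d) + 2*σ*(e*(L*c)) := by
    have h := mul_le_mul_of_nonneg_left hch1 (by positivity : (0:ℝ) ≤ 2*σ)
    linarith
  have hB' := mul_le_mul_of_nonneg_left
    (le_trans hA' (by linarith) : 2*σ*(e*(p - q)) ≤ 2*σ*da + e^2*L^2)
    (by positivity : (0:ℝ) ≤ 2*A)
  have hg' := mul_le_mul_of_nonneg_left hgr hx1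
  have hη' := mul_le_mul_of_nonneg_right hηA hx2
  nlinarith [hB', hg', hη']

lemma md_aux_div (A σ e p q B d : ℝ) (hA : 0 < A) (hσ : 0 < σ) (he : 0 < e) (hB : 0 ≤ B)
    (h : 3*(A*σ)*(e*p) ≤ 4*(A*σ)*(e*q) + 4*(A*σ)*d + σ*(e*B)) :
    3/4*(e*p) ≤ e*(q + B/A) + d := by
  obtain ⟨r, hr0, rfl⟩ : ∃ r, 0 ≤ r ∧ B = A*r :=
    ⟨B/A, div_nonneg hB hA.le, by field_simp⟩
  rw [mul_div_cancel_left₀ r hA.ne']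
  nlinarith [h, mul_pos hA hσ,
    mul_nonneg (mul_nonneg (mul_nonneg hA.le hσ.le) he.le) hr0]

/-- Third part of Lemma 2 of the paper: unweighted potential bound along the
post-attack mirror-descent trajectory,
`Σ_{k=1}^t φ^k ≤ 2 (C₁ t + (C₁ Σ_{k=1}^t η_k + a†)/η_t + a†/η_1)`. -/
theorem md_post_attack_unweighted_potential_bound
    {n : ℕ}
    (Δ : Set (EuclideanSpace ℝ (Fin n)))
    (hΔne : Δ.Nonempty) (hΔclosed : IsClosed Δ) (hΔconv : Convex ℝ Δ)
    (Ψ : EuclideanSpace ℝ (Fin n) → ℝ)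
    (gΨ : EuclideanSpace ℝ (Fin n) → EuclideanSpace ℝ (Fin n))
    (hΨ : ∀ x, HasGradientAt Ψ (gΨ x) x)
    (D : EuclideanSpace ℝ (Fin n) → EuclideanSpace ℝ (Fin n) → ℝ)
    (hD : ∀ x y, D x y = Ψ x - Ψ y - ⟪gΨ y, x - y⟫)
    (σΨ : ℝ) (hσΨ : 0 < σΨ)
    (hstrong : ∀ x ∈ Δ, ∀ y ∈ Δ, σΨ / 2 * ‖x - y‖ ^ 2 ≤ D x y)
    (A B φstar : ℝ) (hA : 0 < A) (hB : 0 ≤ B) (hφstar : 0 ≤ φstar)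
    (μstar : EuclideanSpace ℝ (Fin n)) (hμstar : μstar ∈ Δ)
    (μ : ℕ → EuclideanSpace ℝ (Fin n)) (ℓ : ℕ → EuclideanSpace ℝ (Fin n))
    (φ : ℕ → ℝ) (η : ℕ → ℝ)
    (hμΔ : ∀ t ≥ 1, μ t ∈ Δ)
    (hφpos : ∀ t ≥ 1, 0 ≤ φ t)
    (hgrowth : ∀ t ≥ 1, ‖ℓ t‖ ^ 2 ≤ A * φ t + B)
    (hconvx : ∀ t ≥ 1, ⟪μstar - μ t, ℓ t⟫ ≤ φstar - φ t)
    (hopt : ∀ t ≥ 1, ∀ ν ∈ Δ,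
      ⟪η t • ℓ t + gΨ (μ (t + 1)) - gΨ (μ t), μ (t + 1) - ν⟫ ≤ 0)
    (hηpos : ∀ t ≥ 1, 0 < η t)
    (hηdec : ∀ t ≥ 1, η (t + 1) ≤ η t)
    (hηle : ∀ t ≥ 1, η t ≤ σΨ / (2 * A))
    (adag : ℝ) (hadag : D μstar (μ 1) ≤ adag)
    (C₁ : ℝ) (hC₁ : C₁ = φstar + B / A) :
    ∀ t ≥ 1,
      ∑ k ∈ Finset.Icc 1 t, φ k ≤
        2 * (C₁ * t + (C₁ * ∑ k ∈ Finset.Icc 1 t, η k + adag) / η t + adag / η 1) := by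
  -- Notation: a k := D μstar (μ k)
  -- One-step bound: (3/4) η_k φ_k ≤ η_k C₁ + (a_k − a_{k+1})
  have key : ∀ k, 1 ≤ k → 3/4*(η k * φ k) ≤ η k * C₁ + (D μstar (μ k) - D μstar (μ (k+1))) := by
    intro k hk
    have hk1 : 1 ≤ k + 1 := by omega
    have he : 0 < η k := hηpos k hk
    have huΔ := hμΔ k hk
    have hvΔ := hμΔ (k+1) hk1
    have h3 : D μstar (μ k) - D μstar (μ (k+1)) - D (μ (k+1)) (μ k)
        = ⟪gΨ (μ k), μ (k+1) - μstar⟫ - ⟪gΨ (μ (k+1)), μ (k+1) - μstar⟫ := by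
      simp only [hD, inner_sub_right]
      ring
    have hopt2 : η k * ⟪ℓ k, μ (k+1) - μstar⟫
        ≤ ⟪gΨ (μ k), μ (k+1) - μstar⟫ - ⟪gΨ (μ (k+1)), μ (k+1) - μstar⟫ := by
      have h := hopt k hk μstar hμstar
      simp only [inner_sub_left, inner_add_left, real_inner_smul_left] at h
      linarith
    have hF1 : η k * ⟪ℓ k, μ (k+1) - μstar⟫
        ≤ D μstar (μ k) - D μstar (μ (k+1)) - D (μ (k+1)) (μ k) := by
      rw [h3]; exact hopt2
    have hcv : φ k - φstar ≤ ⟪ℓ k, μ k - μstar⟫ := by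
      have h := hconvx k hk
      have h2 : ⟪ℓ k, μ k - μstar⟫ = - ⟪μstar - μ k, ℓ k⟫ := by
        rw [real_inner_comm]
        simp only [inner_sub_left]
        ring
      linarith [h2.le, h2.ge]
    have hdec : ⟪ℓ k, μ k - μstar⟫ = ⟪ℓ k, μ (k+1) - μstar⟫ + ⟪ℓ k, μ k - μ (k+1)⟫ := by
      simp only [inner_sub_right]; ring
    have hcs : ⟪ℓ k, μ k - μ (k+1)⟫ ≤ ‖ℓ k‖ * ‖μ k - μ (k+1)‖ := real_inner_le_norm _ _
    have hst : σΨ/2 * ‖μ k - μ (k+1)‖^2 ≤ D (μ (k+1)) (μ k) := by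
      have h := hstrong (μ (k+1)) hvΔ (μ k) huΔ
      rwa [norm_sub_rev] at h
    have hgr := hgrowth k hk
    have hηA : 2*A*(η k) ≤ σΨ := by
      have h := hηle k hk
      rw [le_div_iff₀ (by positivity)] at h
      linarith
    have hL0 : (0:ℝ) ≤ ‖ℓ k‖ := norm_nonneg _
    have hc0 : (0:ℝ) ≤ ‖μ k - μ (k+1)‖ := norm_nonneg _
    have hφ0 := hφpos k hk
    have hch1 : η k * (φ k - φstar)
        ≤ (D μstar (μ k) - D μstar (μ (k+1)) - D (μ (k+1)) (μ k))
          + η k * (‖ℓ k‖ * ‖μ k - μ (k+1)‖) := by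
      have h1 := mul_le_mul_of_nonneg_left hcv he.le
      have h2 := mul_le_mul_of_nonneg_left hcs he.le
      rw [hdec] at h1
      nlinarith [hF1]
    have hch2 : 2*σΨ*(η k * (‖ℓ k‖ * ‖μ k - μ (k+1)‖))
        ≤ (η k)^2*‖ℓ k‖^2 + 2*σΨ*(D (μ (k+1)) (μ k)) := by
      nlinarith [sq_nonneg (η k * ‖ℓ k‖ - σΨ * ‖μ k - μ (k+1)‖), hst, hσΨ]
    have hch3 : 3*(A*σΨ)*(η k * φ k)
        ≤ 4*(A*σΨ)*(η k * φstar) + 4*(A*σΨ)*(D μstar (μ k) - D μstar (μ (k+1)))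
          + σΨ*(η k * B) := by
      refine md_aux_combine A σΨ (η k) (φ k) φstar ‖ℓ k‖ ‖μ k - μ (k+1)‖
        (D (μ (k+1)) (μ k)) (D μstar (μ k) - D μstar (μ (k+1))) B
        hσΨ hA he hB hφ0 ?_ hch2 hgr hηA
      linarith [hch1]
    rw [hC₁]
    exact md_aux_div A σΨ (η k) (φ k) φstar B _ hA hσΨ he hB hch3
  -- consequences of the one-step bound
  have key2 : ∀ k, 1 ≤ k → η k * φ k
      ≤ 2*(η k * C₁) + 2*(D μstar (μ k) - D μstar (μ (k+1))) := by
    intro k hk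
    have h := key k hk
    have hp : 0 ≤ η k * φ k := mul_nonneg (hηpos k hk).le (hφpos k hk)
    linarith
  have haux : ∀ k, 1 ≤ k → D μstar (μ (k+1)) ≤ D μstar (μ k) + η k * C₁ := by
    intro k hk
    have h := key k hk
    have hp : 0 ≤ η k * φ k := mul_nonneg (hηpos k hk).le (hφpos k hk)
    linarith
  have han : ∀ k, 1 ≤ k → 0 ≤ D μstar (μ k) := by
    intro k hk
    have h := hstrong μstar hμstar (μ k) (hμΔ k hk)
    nlinarith [sq_nonneg ‖μstar - μ k‖, hσΨ]
  have hC₁0 : 0 ≤ C₁ := by rw [hC₁]; positivity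
  have hinv : ∀ k, 1 ≤ k → 0 < (η k)⁻¹ := fun k hk => inv_pos.mpr (hηpos k hk)
  have hSb : ∀ k, 1 ≤ k → D μstar (μ k) ≤ adag + C₁ * ∑ j ∈ Finset.Icc 1 (k-1), η j := by
    intro k hk
    induction k, hk using Nat.le_induction with
    | base => simpa using hadag
    | succ m hm ih =>
      obtain ⟨p, rfl⟩ : ∃ p, m = p + 1 := ⟨m-1, by omega⟩
      simp only [Nat.add_sub_cancel] at ih ⊢
      have hsum : ∑ j ∈ Finset.Icc 1 (p+1), η j
          = (∑ j ∈ Finset.Icc 1 p, η j) + η (p+1) :=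
        Finset.sum_Icc_succ_top (by omega) η
      have h1 := haux (p+1) (by omega)
      rw [hsum]
      nlinarith [h1, ih]
  have key3 : ∀ k, 1 ≤ k → φ k
      ≤ 2*C₁ + (2*(D μstar (μ k) - D μstar (μ (k+1)))) * (η k)⁻¹ := by
    intro k hk
    have hne : η k ≠ 0 := (hηpos k hk).ne'
    have h := mul_le_mul_of_nonneg_right (key2 k hk) (hinv k hk).le
    calc φ k = (η k * φ k) * (η k)⁻¹ := by field_simp
    _ ≤ (2*(η k * C₁) + 2*(D μstar (μ k) - D μstar (μ (k+1)))) * (η k)⁻¹ := h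
    _ = 2*C₁ + (2*(D μstar (μ k) - D μstar (μ (k+1)))) * (η k)⁻¹ := by
        field_simp
  -- main induction
  have hQ : ∀ s, 1 ≤ s →
      (∑ k ∈ Finset.Icc 1 s, φ k) + (2 * D μstar (μ (s+1))) * (η s)⁻¹
        ≤ 2*C₁*(s:ℝ) + (2*adag)*(η 1)⁻¹
          + (2*(adag + C₁ * ∑ k ∈ Finset.Icc 1 s, η k)) * (η s)⁻¹ := by
    intro s hs
    induction s, hs using Nat.le_induction with
    | base =>
      simp only [Finset.Icc_self, Finset.sum_singleton, Nat.cast_one]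
      have h1 := key3 1 (le_refl 1)
      have ha1 := han 1 (le_refl 1)
      have hi1 := hinv 1 (le_refl 1)
      have hado : 0 ≤ adag := le_trans ha1 hadag
      have hmono : 2*(D μstar (μ 1)) * (η 1)⁻¹ ≤ 2*adag*(η 1)⁻¹ :=
        mul_le_mul_of_nonneg_right (by linarith) hi1.le
      have hextra : 0 ≤ 2*(adag + C₁*η 1) * (η 1)⁻¹ :=
        mul_nonneg (by nlinarith [mul_nonneg hC₁0 (hηpos 1 (le_refl 1)).le]) hi1.le
      linarith [h1, hmono, hextra]
    | succ m hm ih =>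
      have hm1 : 1 ≤ m + 1 := by omega
      have hsumφ : ∑ k ∈ Finset.Icc 1 (m+1), φ k
          = (∑ k ∈ Finset.Icc 1 m, φ k) + φ (m+1) :=
        Finset.sum_Icc_succ_top (by omega) φ
      have hsumη : ∑ k ∈ Finset.Icc 1 (m+1), η k
          = (∑ k ∈ Finset.Icc 1 m, η k) + η (m+1) :=
        Finset.sum_Icc_succ_top (by omega) η
      have h1 := key3 (m+1) hm1
      have hab : D μstar (μ (m+1)) ≤ adag + C₁ * ∑ j ∈ Finset.Icc 1 m, η j := by
        have h := hSb (m+1) hm1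
        simpa using h
      have hii : (η m)⁻¹ ≤ (η (m+1))⁻¹ :=
        inv_anti₀ (hηpos (m+1) hm1) (hηdec m hm)
      have hcross : 0 ≤ (adag + C₁ * (∑ j ∈ Finset.Icc 1 m, η j) - D μstar (μ (m+1)))
          * ((η (m+1))⁻¹ - (η m)⁻¹) :=
        mul_nonneg (by linarith) (by linarith)
      have hCηi : 0 ≤ C₁ * η (m+1) * (η (m+1))⁻¹ :=
        mul_nonneg (mul_nonneg hC₁0 (hηpos (m+1) hm1).le) (hinv (m+1) hm1).le
      rw [hsumφ, hsumη]
      push_cast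
      linarith [ih, h1, hcross, hCηi]
  intro t ht
  have h := hQ t ht
  have hdrop : 0 ≤ (2 * D μstar (μ (t+1))) * (η t)⁻¹ :=
    mul_nonneg (by linarith [han (t+1) (by omega : 1 ≤ t+1)]) (hinv t ht).le
  rw [div_eq_mul_inv, div_eq_mul_inv]
  nlinarith [h, hdrop]
end

section
/- Let Δ ⊆ ℝ^n be a nonempty convex set, let Φ : ℝ^n → ℝ be convex and differentiable, and let A > 0, B ≥ 0 be constants such that ‖∇Φ(μ)‖² ≤ A Φ(μ) + B for all μ ∈ Δ. Let μ* ∈ Δ be a minimizer of Φ over Δ and set Φ* = Φ(μ*), assuming A Φ* + B ≥ 0. Then for all μ ∈ Δ: ‖∇Φ(μ)‖² ≤ 2 ( A² ‖μ − μ*‖² + A Φ* + B ). -/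
open scoped RealInnerProductSpace

lemma convex_grad_ineq {n : ℕ}
    (Φ : EuclideanSpace ℝ (Fin n) → ℝ)
    (gΦ : EuclideanSpace ℝ (Fin n) → EuclideanSpace ℝ (Fin n))
    (hΦconv : ConvexOn ℝ Set.univ Φ)
    (hΦgrad : ∀ x, HasGradientAt Φ (gΦ x) x)
    (x y : EuclideanSpace ℝ (Fin n)) :
    Φ x + ⟪gΦ x, y - x⟫ ≤ Φ y := by
  set c : ℝ → EuclideanSpace ℝ (Fin n) := fun t => x + t • (y - x) with hc
  have hcd : HasDerivAt c (y - x) 0 := by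
    have : HasDerivAt (fun t : ℝ => t • (y - x)) ((1 : ℝ) • (y - x)) 0 :=
      (hasDerivAt_id 0).smul_const (y - x)
    simpa [hc] using this.const_add x
  set h : ℝ → ℝ := fun t => Φ (c t) with hh
  have hconv : ConvexOn ℝ Set.univ h := by
    have := hΦconv.comp_affineMap
      (AffineMap.const ℝ ℝ x + (LinearMap.toSpanSingleton ℝ _ (y - x)).toAffineMap)
    have he : h = Φ ∘ (AffineMap.const ℝ ℝ x + (LinearMap.toSpanSingleton ℝ _ (y - x)).toAffineMap) := by
      funext t
      simp [hh, hc, LinearMap.toSpanSingleton_apply, add_comm]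
    rw [he]
    simpa using this
  have hderiv : HasDerivAt h ⟪gΦ x, y - x⟫ 0 := by
    have hc0 : c 0 = x := by simp [hc]
    have hf : HasFDerivAt Φ ((InnerProductSpace.toDual ℝ _) (gΦ x)) (c 0) :=
      hc0 ▸ (hΦgrad x).hasFDerivAt
    have := hf.comp_hasDerivAt 0 hcd
    exact this
  have := hconv.le_slope_of_hasDerivWithinAt (Set.mem_univ 0) (Set.mem_univ 1)
    one_pos (hderiv.hasDerivWithinAt)
  have hs : slope h 0 1 = Φ y - Φ x := by
    simp [slope, hh, hc]
  rw [hs] at this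
  linarith

/-- Self-bounding property of the gradient of the mean Beckmann potential
(auxiliary Lemma of the paper):
`‖∇Φ(μ)‖² ≤ 2 (A² ‖μ − μ*‖² + A Φ* + B)` for all `μ ∈ Δ`. -/
theorem gradient_self_bound
    {n : ℕ}
    (Δ : Set (EuclideanSpace ℝ (Fin n)))
    (hΔne : Δ.Nonempty) (hΔconv : Convex ℝ Δ)
    (Φ : EuclideanSpace ℝ (Fin n) → ℝ)
    (gΦ : EuclideanSpace ℝ (Fin n) → EuclideanSpace ℝ (Fin n))
    (hΦconv : ConvexOn ℝ Set.univ Φ)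
    (hΦgrad : ∀ x, HasGradientAt Φ (gΦ x) x)
    (A B : ℝ) (hA : 0 < A) (hB : 0 ≤ B)
    (hgrowth : ∀ μ ∈ Δ, ‖gΦ μ‖ ^ 2 ≤ A * Φ μ + B)
    (μstar : EuclideanSpace ℝ (Fin n)) (hμstarΔ : μstar ∈ Δ)
    (hmin : ∀ μ ∈ Δ, Φ μstar ≤ Φ μ)
    (Φstar : ℝ) (hΦstar : Φstar = Φ μstar)
    (hpos : 0 ≤ A * Φstar + B) :
    ∀ μ ∈ Δ, ‖gΦ μ‖ ^ 2 ≤ 2 * (A ^ 2 * ‖μ - μstar‖ ^ 2 + A * Φstar + B) := by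
  intro μ hμ
  have hsub := convex_grad_ineq Φ gΦ hΦconv hΦgrad μ μstar
  -- Φ μ ≤ Φ* + ⟪gΦ μ, μ - μ*⟫
  have h1 : Φ μ ≤ Φstar + ⟪gΦ μ, μ - μstar⟫ := by
    have : ⟪gΦ μ, μstar - μ⟫ = -⟪gΦ μ, μ - μstar⟫ := by
      rw [← inner_neg_right]; congr 1; abel
    rw [this] at hsub
    rw [hΦstar]; linarith
  have hcs : ⟪gΦ μ, μ - μstar⟫ ≤ ‖gΦ μ‖ * ‖μ - μstar‖ := real_inner_le_norm _ _
  have hamgm : A * (‖gΦ μ‖ * ‖μ - μstar‖) ≤ ‖gΦ μ‖ ^ 2 / 2 + A ^ 2 * ‖μ - μstar‖ ^ 2 / 2 := by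
    nlinarith [sq_nonneg (‖gΦ μ‖ - A * ‖μ - μstar‖)]
  have hg := hgrowth μ hμ
  nlinarith [mul_le_mul_of_nonneg_left hcs hA.le]
end

section
/- Let Δ ⊆ ℝ^n be a nonempty closed convex set, Ψ : ℝ^n → ℝ differentiable and σ_Ψ-strongly convex on Δ (D_Ψ(x,y) ≥ (σ_Ψ/2)‖x−y‖² on Δ, where D_Ψ(x,y) = Ψ(x) − Ψ(y) − ⟨∇Ψ(y), x−y⟩), and Φ : ℝ^n → ℝ convex differentiable with μ* ∈ Δ, Φ* = Φ(μ*). Let A > 0, B ≥ 0, φ* ≥ 0, and let (μ^t)_{t≥1} ⊆ Δ, (ℓ^t)_{t≥1} ⊆ ℝ^n, (φ^t)_{t≥1} with φ^t ≥ 0 satisfy for every t: (a) ⟨η_t ℓ^t + ∇Ψ(μ^{t+1}) − ∇Ψ(μ^t), μ^{t+1} − ν⟩ ≤ 0 for all ν ∈ Δ; (b) ‖ℓ^t‖² ≤ A φ^t + B; (c) ⟨μ* − μ^t, ℓ^t⟩ ≤ φ* − φ^t; (d) ⟨μ* − μ^t, ∇Φ(μ^t)⟩ ≤ Φ* − Φ(μ^t);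 with non-increasing step sizes 0 < η_{t+1} ≤ η_t ≤ σ_Ψ/(2A) and D_Ψ(μ*, μ^1) ≤ a†. Set C₁ = φ* + B/A and ξ_k = η_k ⟨μ* − μ^k, ℓ^k − ∇Φ(μ^k)⟩. Then for every T ≥ 1: Σ_{k=1}^T η_k (Φ(μ^k) − Φ*) ≤ (1 + 4Aη_1/σ_Ψ) a† + Σ_{k=1}^T ξ_k + ((4AC₁ + 2B)/σ_Ψ) Σ_{k=1}^T η_k². -/
open scoped RealInnerProductSpace

set_option maxHeartbeats 1000000 in
/-- Pathwise regret decomposition underlying Proposition 1 of the paper: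
`Σ_{k=1}^T η_k (Φ(μ^k) − Φ*) ≤ (1 + 4Aη_1/σ_Ψ) a† + Σ_{k=1}^T ξ_k
 + ((4AC₁ + 2B)/σ_Ψ) Σ_{k=1}^T η_k²`. -/
theorem md_pathwise_regret_decomposition
    {n : ℕ}
    (Δ : Set (EuclideanSpace ℝ (Fin n)))
    (hΔne : Δ.Nonempty) (hΔclosed : IsClosed Δ) (hΔconv : Convex ℝ Δ)
    (Ψ : EuclideanSpace ℝ (Fin n) → ℝ)
    (gΨ : EuclideanSpace ℝ (Fin n) → EuclideanSpace ℝ (Fin n))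
    (hΨ : ∀ x, HasGradientAt Ψ (gΨ x) x)
    (D : EuclideanSpace ℝ (Fin n) → EuclideanSpace ℝ (Fin n) → ℝ)
    (hD : ∀ x y, D x y = Ψ x - Ψ y - ⟪gΨ y, x - y⟫)
    (σΨ : ℝ) (hσΨ : 0 < σΨ)
    (hstrong : ∀ x ∈ Δ, ∀ y ∈ Δ, σΨ / 2 * ‖x - y‖ ^ 2 ≤ D x y)
    (Φ : EuclideanSpace ℝ (Fin n) → ℝ)
    (gΦ : EuclideanSpace ℝ (Fin n) → EuclideanSpace ℝ (Fin n))
    (hΦconv : ConvexOn ℝ Set.univ Φ)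
    (hΦgrad : ∀ x, HasGradientAt Φ (gΦ x) x)
    (μstar : EuclideanSpace ℝ (Fin n)) (hμstar : μstar ∈ Δ)
    (Φstar : ℝ) (hΦstar : Φstar = Φ μstar)
    (A B φstar : ℝ) (hA : 0 < A) (hB : 0 ≤ B) (hφstar : 0 ≤ φstar)
    (μ : ℕ → EuclideanSpace ℝ (Fin n)) (ℓ : ℕ → EuclideanSpace ℝ (Fin n))
    (φ : ℕ → ℝ) (η : ℕ → ℝ)
    (hμΔ : ∀ t ≥ 1, μ t ∈ Δ)
    (hφpos : ∀ t ≥ 1, 0 ≤ φ t)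
    (hopt : ∀ t ≥ 1, ∀ ν ∈ Δ,
      ⟪η t • ℓ t + gΨ (μ (t + 1)) - gΨ (μ t), μ (t + 1) - ν⟫ ≤ 0)
    (hgrowth : ∀ t ≥ 1, ‖ℓ t‖ ^ 2 ≤ A * φ t + B)
    (hconvφ : ∀ t ≥ 1, ⟪μstar - μ t, ℓ t⟫ ≤ φstar - φ t)
    (hconvΦ : ∀ t ≥ 1, ⟪μstar - μ t, gΦ (μ t)⟫ ≤ Φstar - Φ (μ t))
    (hηpos : ∀ t ≥ 1, 0 < η t)
    (hηdec : ∀ t ≥ 1, η (t + 1) ≤ η t)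
    (hηle : ∀ t ≥ 1, η t ≤ σΨ / (2 * A))
    (adag : ℝ) (hadag : D μstar (μ 1) ≤ adag)
    (C₁ : ℝ) (hC₁ : C₁ = φstar + B / A)
    (ξ : ℕ → ℝ) (hξ : ∀ k, ξ k = η k * ⟪μstar - μ k, ℓ k - gΦ (μ k)⟫) :
    ∀ T ≥ 1,
      ∑ k ∈ Finset.Icc 1 T, η k * (Φ (μ k) - Φstar) ≤
        (1 + 4 * A * η 1 / σΨ) * adag + ∑ k ∈ Finset.Icc 1 T, ξ k +
          (4 * A * C₁ + 2 * B) / σΨ * ∑ k ∈ Finset.Icc 1 T, η k ^ 2 := by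
  intro T hT
  set Dfun : ℕ → ℝ := fun k => D μstar (μ k) with hDfun
  have hησ : ∀ t, 1 ≤ t → 2 * A * η t ≤ σΨ := by
    intro t ht
    have h := hηle t ht
    rw [le_div_iff₀ (by positivity)] at h
    linarith
  have hDnn : ∀ k, 1 ≤ k → 0 ≤ Dfun k := by
    intro k hk
    have h := hstrong μstar hμstar (μ k) (hμΔ k hk)
    have h0 : (0:ℝ) ≤ σΨ / 2 * ‖μstar - μ k‖ ^ 2 :=
      mul_nonneg (by linarith) (sq_nonneg _)
    exact le_trans h0 h
  have hadag0 : (0:ℝ) ≤ adag := le_trans (hDnn 1 le_rfl) hadag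
  have h2σ : (0:ℝ) < 2 * σΨ := by linarith
  -- mirror-descent per-step inequality
  have step1 : ∀ t, 1 ≤ t →
      η t * ⟪ℓ t, μ t - μstar⟫ ≤
        Dfun t - Dfun (t + 1) + η t ^ 2 * ‖ℓ t‖ ^ 2 / (2 * σΨ) := by
    intro t ht
    have hμt := hμΔ t ht
    have hμt1 := hμΔ (t + 1) (by omega)
    have h3pt : ⟪gΨ (μ (t + 1)) - gΨ (μ t), μ (t + 1) - μstar⟫ =
        D μstar (μ (t + 1)) + D (μ (t + 1)) (μ t) - D μstar (μ t) := by
      simp only [hD, inner_sub_left, inner_sub_right]; ring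
    have hexp : ⟪η t • ℓ t + gΨ (μ (t + 1)) - gΨ (μ t), μ (t + 1) - μstar⟫ =
        η t * ⟪ℓ t, μ (t + 1) - μstar⟫ +
          ⟪gΨ (μ (t + 1)) - gΨ (μ t), μ (t + 1) - μstar⟫ := by
      simp only [inner_sub_left, inner_add_left, real_inner_smul_left]; ring
    have hopt' := hopt t ht μstar hμstar
    rw [hexp, h3pt] at hopt'
    have hsplit : ⟪ℓ t, μ t - μstar⟫ =
        ⟪ℓ t, μ (t + 1) - μstar⟫ + ⟪ℓ t, μ t - μ (t + 1)⟫ := by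
      simp only [inner_sub_right]; ring
    have hcs : ⟪ℓ t, μ t - μ (t + 1)⟫ ≤ ‖ℓ t‖ * ‖μ t - μ (t + 1)‖ :=
      real_inner_le_norm _ _
    have hnrev : ‖μ t - μ (t + 1)‖ = ‖μ (t + 1) - μ t‖ := norm_sub_rev _ _
    have hstr := hstrong (μ (t + 1)) hμt1 (μ t) hμt
    have hηt := hηpos t ht
    have hcs' : η t * ⟪ℓ t, μ t - μ (t + 1)⟫ ≤
        η t * (‖ℓ t‖ * ‖μ (t + 1) - μ t‖) := by
      rw [← hnrev]; exact mul_le_mul_of_nonneg_left hcs hηt.le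
    have hc : η t ^ 2 * ‖ℓ t‖ ^ 2 =
        η t ^ 2 * ‖ℓ t‖ ^ 2 / (2 * σΨ) * (2 * σΨ) := by field_simp
    have hquad : η t * (‖ℓ t‖ * ‖μ (t + 1) - μ t‖) ≤
        σΨ / 2 * ‖μ (t + 1) - μ t‖ ^ 2 + η t ^ 2 * ‖ℓ t‖ ^ 2 / (2 * σΨ) := by
      nlinarith [sq_nonneg (σΨ * ‖μ (t + 1) - μ t‖ - η t * ‖ℓ t‖), hσΨ, hc,
        sq_nonneg (η t * ‖ℓ t‖)]
    have hmul' : η t * ⟪ℓ t, μ (t + 1) - μstar⟫ ≤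
        D μstar (μ t) - D μstar (μ (t + 1)) - D (μ (t + 1)) (μ t) := by
      nlinarith [mul_le_mul_of_nonneg_left hopt' hηt.le]
    have hsum : η t * ⟪ℓ t, μ t - μstar⟫ =
        η t * ⟪ℓ t, μ (t + 1) - μstar⟫ + η t * ⟪ℓ t, μ t - μ (t + 1)⟫ := by
      rw [hsplit]; ring
    simp only [hDfun]
    linarith [hmul', hcs', hquad, hstr, hsum]
  -- per-step regret bound
  have key1 : ∀ t, 1 ≤ t →
      η t * (Φ (μ t) - Φstar) ≤
        ξ t + (Dfun t - Dfun (t + 1)) +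
          (A * (η t ^ 2 * φ t) + B * η t ^ 2) / (2 * σΨ) := by
    intro t ht
    have hηt := hηpos t ht
    have hd := hconvΦ t ht
    have hstepΦ : η t * (Φ (μ t) - Φstar) ≤ ξ t + η t * ⟪ℓ t, μ t - μstar⟫ := by
      have hid : ⟪μstar - μ t, ℓ t - gΦ (μ t)⟫ + ⟪ℓ t, μ t - μstar⟫ =
          -⟪μstar - μ t, gΦ (μ t)⟫ := by
        simp only [inner_sub_left, inner_sub_right]
        rw [real_inner_comm (ℓ t) (μ t), real_inner_comm (ℓ t) μstar]
        ring
      have h1 : η t * (Φ (μ t) - Φstar) ≤ η t * (-⟪μstar - μ t, gΦ (μ t)⟫) :=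
        mul_le_mul_of_nonneg_left (by linarith) hηt.le
      have h2 : ξ t + η t * ⟪ℓ t, μ t - μstar⟫ =
          η t * (-⟪μstar - μ t, gΦ (μ t)⟫) := by
        rw [hξ t]; linear_combination (η t) * hid
      linarith
    have hgr := hgrowth t ht
    have hbd : η t ^ 2 * ‖ℓ t‖ ^ 2 / (2 * σΨ) ≤
        (A * (η t ^ 2 * φ t) + B * η t ^ 2) / (2 * σΨ) := by
      apply div_le_div_of_nonneg_right ?_ h2σ.le
      nlinarith [sq_nonneg (η t)]
    linarith [step1 t ht, hstepΦ, hbd]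
  -- per-step bound on η φ
  have key2 : ∀ t, 1 ≤ t →
      3 / 4 * (η t * φ t) ≤
        η t * φstar + (Dfun t - Dfun (t + 1)) + B * η t ^ 2 / (2 * σΨ) := by
    intro t ht
    have hηt := hηpos t ht
    have hφt := hφpos t ht
    have hcφ := hconvφ t ht
    have hcomm : ⟪ℓ t, μ t - μstar⟫ = -⟪μstar - μ t, ℓ t⟫ := by
      simp only [inner_sub_left, inner_sub_right]
      rw [real_inner_comm (ℓ t) (μ t), real_inner_comm (ℓ t) μstar]
      ring
    have hlow : η t * (φ t - φstar) ≤ η t * ⟪ℓ t, μ t - μstar⟫ := by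
      apply mul_le_mul_of_nonneg_left _ hηt.le
      rw [hcomm]; linarith
    have hgr := hgrowth t ht
    have hbd : η t ^ 2 * ‖ℓ t‖ ^ 2 / (2 * σΨ) ≤
        (A * (η t ^ 2 * φ t) + B * η t ^ 2) / (2 * σΨ) := by
      apply div_le_div_of_nonneg_right ?_ h2σ.le
      nlinarith [sq_nonneg (η t)]
    have hquart : A * (η t ^ 2 * φ t) / (2 * σΨ) ≤ η t * φ t / 4 := by
      rw [div_le_div_iff₀ h2σ (by norm_num : (0:ℝ) < 4)]
      nlinarith [hησ t ht, mul_nonneg hηt.le hφt]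
    have hsplitdiv : (A * (η t ^ 2 * φ t) + B * η t ^ 2) / (2 * σΨ) =
        A * (η t ^ 2 * φ t) / (2 * σΨ) + B * η t ^ 2 / (2 * σΨ) := by
      ring
    linarith [step1 t ht, hlow, hbd, hquart, hsplitdiv.le, hsplitdiv.ge]
  -- per-step bound on A η² φ
  have key3 : ∀ t, 1 ≤ t →
      A * (η t ^ 2 * φ t) ≤
        4 / 3 * (A * φstar) * η t ^ 2 +
          4 / 3 * A * (η t * (Dfun t - Dfun (t + 1))) + 1 / 3 * B * η t ^ 2 := by
    intro t ht
    have hηt := hηpos t ht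
    have hφt := hφpos t ht
    have hk2 := key2 t ht
    have hmul := mul_le_mul_of_nonneg_left hk2
      (by positivity : (0:ℝ) ≤ 4 / 3 * A * η t)
    have hcube : 4 / 3 * A * η t * (B * η t ^ 2 / (2 * σΨ)) ≤ 1 / 3 * B * η t ^ 2 := by
      rw [show 4 / 3 * A * η t * (B * η t ^ 2 / (2 * σΨ)) =
          4 / 3 * A * η t * (B * η t ^ 2) / (2 * σΨ) by ring]
      rw [div_le_iff₀ h2σ]
      nlinarith [hησ t ht, mul_nonneg hB (sq_nonneg (η t))]
    nlinarith [hmul, hcube]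
  -- telescoping sums
  have tele : ∀ (f : ℕ → ℝ) (S : ℕ),
      ∑ k ∈ Finset.Icc 1 S, (f k - f (k + 1)) = f 1 - f (S + 1) := by
    intro f S
    induction S with
    | zero => simp
    | succ m ih =>
      rw [Finset.sum_Icc_succ_top (by omega), ih]; ring
  have wtele : ∀ S, 1 ≤ S →
      ∑ k ∈ Finset.Icc 1 S, η k * (Dfun k - Dfun (k + 1)) ≤
        η 1 * Dfun 1 - η S * Dfun (S + 1) := by
    intro S hS
    induction S, hS using Nat.le_induction with
    | base =>
      rw [Finset.Icc_self, Finset.sum_singleton]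
      exact le_of_eq (by ring)
    | succ m hm ih =>
      rw [Finset.sum_Icc_succ_top (by omega)]
      have hdec := hηdec m hm
      have hDm := hDnn (m + 1) (by omega)
      nlinarith [ih, mul_nonneg (sub_nonneg.mpr hdec) hDm]
  -- sums
  set Sξ := ∑ k ∈ Finset.Icc 1 T, ξ k with hSξ
  set Sη2 := ∑ k ∈ Finset.Icc 1 T, η k ^ 2 with hSη2
  set Sφ := ∑ k ∈ Finset.Icc 1 T, η k ^ 2 * φ k with hSφ
  set SW := ∑ k ∈ Finset.Icc 1 T, η k * (Dfun k - Dfun (k + 1)) with hSW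
  have hmem : ∀ k ∈ Finset.Icc 1 T, 1 ≤ k := fun k hk => (Finset.mem_Icc.mp hk).1
  have H1 : ∑ k ∈ Finset.Icc 1 T, η k * (Φ (μ k) - Φstar) ≤
      Sξ + (Dfun 1 - Dfun (T + 1)) + (A * Sφ + B * Sη2) / (2 * σΨ) := by
    calc ∑ k ∈ Finset.Icc 1 T, η k * (Φ (μ k) - Φstar)
        ≤ ∑ k ∈ Finset.Icc 1 T, (ξ k + (Dfun k - Dfun (k + 1)) +
            (A * (η k ^ 2 * φ k) + B * η k ^ 2) / (2 * σΨ)) :=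
          Finset.sum_le_sum (fun k hk => key1 k (hmem k hk))
      _ = Sξ + (Dfun 1 - Dfun (T + 1)) + (A * Sφ + B * Sη2) / (2 * σΨ) := by
          rw [Finset.sum_add_distrib, Finset.sum_add_distrib, tele Dfun T,
            ← Finset.sum_div, hSξ, hSφ, hSη2]
          congr 1
          rw [Finset.sum_add_distrib, ← Finset.mul_sum, ← Finset.mul_sum]
  have H2 : A * Sφ ≤ 4 / 3 * (A * φstar) * Sη2 + 4 / 3 * A * SW +
      1 / 3 * B * Sη2 := by
    calc A * Sφ = ∑ k ∈ Finset.Icc 1 T, A * (η k ^ 2 * φ k) := by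
          rw [hSφ, Finset.mul_sum]
      _ ≤ ∑ k ∈ Finset.Icc 1 T, (4 / 3 * (A * φstar) * η k ^ 2 +
            4 / 3 * A * (η k * (Dfun k - Dfun (k + 1))) + 1 / 3 * B * η k ^ 2) :=
          Finset.sum_le_sum (fun k hk => key3 k (hmem k hk))
      _ = 4 / 3 * (A * φstar) * Sη2 + 4 / 3 * A * SW + 1 / 3 * B * Sη2 := by
          rw [Finset.sum_add_distrib, Finset.sum_add_distrib, hSη2, hSW,
            ← Finset.mul_sum, ← Finset.mul_sum, ← Finset.mul_sum]
  have H3 : SW ≤ η 1 * adag := by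
    have h := wtele T hT
    have h1 : η 1 * Dfun 1 ≤ η 1 * adag :=
      mul_le_mul_of_nonneg_left hadag (hηpos 1 le_rfl).le
    have h2 : 0 ≤ η T * Dfun (T + 1) :=
      mul_nonneg (hηpos T hT).le (hDnn (T + 1) (by omega))
    linarith
  have hSη2nn : (0:ℝ) ≤ Sη2 :=
    Finset.sum_nonneg (fun k _ => sq_nonneg (η k))
  have hAC : A * C₁ = A * φstar + B := by
    rw [hC₁]; field_simp
  have main : A * Sφ + B * Sη2 ≤ 8 * A * η 1 * adag + (8 * A * C₁ + 4 * B) * Sη2 := by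
    have hASW : 4 / 3 * A * SW ≤ 4 / 3 * A * (η 1 * adag) :=
      mul_le_mul_of_nonneg_left H3 (by positivity)
    nlinarith [H2, hASW, mul_nonneg (mul_nonneg hA.le (hηpos 1 le_rfl).le) hadag0,
      mul_nonneg (mul_nonneg hA.le hφstar) hSη2nn, mul_nonneg hB hSη2nn, hAC]
  have hfrac : (A * Sφ + B * Sη2) / (2 * σΨ) ≤
      4 * A * η 1 / σΨ * adag + (4 * A * C₁ + 2 * B) / σΨ * Sη2 := by
    rw [div_le_iff₀ h2σ]
    have hrw : (4 * A * η 1 / σΨ * adag + (4 * A * C₁ + 2 * B) / σΨ * Sη2) *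
        (2 * σΨ) = 8 * A * η 1 * adag + (8 * A * C₁ + 4 * B) * Sη2 := by
      field_simp; ring
    rw [hrw]; exact main
  have hDT1 := hDnn (T + 1) (by omega)
  have hD1 : Dfun 1 ≤ adag := hadag
  linarith [H1, hfrac, hDT1, hD1]
end

section
/- Fix a finite index set of n paths partitioned into nonempty blocks (𝒫_w)_{w∈𝒲} with demands m_w > 0, and let Δ = {μ ∈ ℝ^n : μ_p ≥ 0 for all p, and Σ_{p∈𝒫_w} μ_p = m_w for every w ∈ 𝒲}. Let μ, μ† ∈ Δ be such that for every p, μ_p > 0 implies μ†_p > 0. For each w let γ_w = min{ μ†_p : p ∈ 𝒫_w, μ†_p > 0 } and γ = min_{w∈𝒲} γ_w, and let M̄ = Σ_{w∈𝒲} m_w. Then (with natural logarithm and the convention 0 log 0 = 0) the negentropy Bregman divergence satisfies D(μ, μ†) = Σ_p μ_p log(μ_p/μ†_p) ≤ Σ_{w∈𝒲} ( Σ_{p∈𝒫_w} |μ_p − μ†_p| )² / γ_w ≤ 4 M̄² / γ. -/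
/-- Magnitude bound for the `Supp` informational attack (Proposition 2(b) of
the paper), via a reverse Pinsker-type inequality: for flows `μ, μ† ∈ Δ` with
`supp(μ) ⊆ supp(μ†)`, the negentropy Bregman divergence satisfies
`D(μ, μ†) = Σ_p μ_p log(μ_p/μ†_p) ≤ Σ_w (Σ_{p∈𝒫_w} |μ_p − μ†_p|)²/γ_w
 ≤ 4M̄²/γ`. -/
theorem supp_attack_magnitude_bound
    {n : ℕ} {W : Type*} [Fintype W] [Nonempty W]
    (P : W → Finset (Fin n)) (m : W → ℝ)
    (hP_ne : ∀ w, (P w).Nonempty)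
    (hP_disj : ∀ w w', w ≠ w' → Disjoint (P w) (P w'))
    (hP_cover : ∀ p, ∃ w, p ∈ P w)
    (hm : ∀ w, 0 < m w)
    (Δ : Set (Fin n → ℝ))
    (hΔ : Δ = {μ : Fin n → ℝ | (∀ p, 0 ≤ μ p) ∧ ∀ w, ∑ p ∈ P w, μ p = m w})
    (μ μdag : Fin n → ℝ) (hμ : μ ∈ Δ) (hμdag : μdag ∈ Δ)
    (hsupp : ∀ p, 0 < μ p → 0 < μdag p)
    (γw : W → ℝ)
    (hγw : ∀ w, IsLeast {x : ℝ | ∃ p ∈ P w, 0 < μdag p ∧ μdag p = x} (γw w))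
    (γ : ℝ) (hγ : γ = Finset.univ.inf' Finset.univ_nonempty γw)
    (Mbar : ℝ) (hMbar : Mbar = ∑ w, m w) :
    (∑ p, μ p * Real.log (μ p / μdag p)) ≤
        (∑ w, (∑ p ∈ P w, |μ p - μdag p|) ^ 2 / γw w) ∧
      (∑ w, (∑ p ∈ P w, |μ p - μdag p|) ^ 2 / γw w) ≤ 4 * Mbar ^ 2 / γ := by
  subst hΔ
  obtain ⟨hμ0, hμm⟩ := hμ
  obtain ⟨hν0, hνm⟩ := hμdag
  -- positivity of γw
  have hγwpos : ∀ w, 0 < γw w := by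
    intro w
    obtain ⟨⟨p, _, hp, hpe⟩, _⟩ := hγw w
    simpa [hpe] using hp
  have hγwle : ∀ w, ∀ p ∈ P w, 0 < μdag p → γw w ≤ μdag p := by
    intro w p hp hpos
    exact (hγw w).2 ⟨p, hp, hpos, rfl⟩
  have hγpos : 0 < γ := by
    rw [hγ]
    exact (Finset.lt_inf'_iff _).2 fun w _ => hγwpos w
  have hγle : ∀ w, γ ≤ γw w := by
    intro w
    rw [hγ]
    exact Finset.inf'_le _ (Finset.mem_univ w)
  -- partition univ into blocks
  have huniv : (Finset.univ : Finset (Fin n)) = Finset.univ.biUnion P := by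
    ext p
    simpa using hP_cover p
  have hsum : ∀ f : Fin n → ℝ, ∑ p, f p = ∑ w, ∑ p ∈ P w, f p := by
    intro f
    rw [huniv, Finset.sum_biUnion]
    intro w _ w' _ hne
    exact hP_disj w w' hne
  -- supp: μdag p = 0 → μ p = 0
  have hzero : ∀ p, μdag p ≤ 0 → μ p = 0 := by
    intro p h
    by_contra hne
    have := hsupp p (lt_of_le_of_ne (hμ0 p) (Ne.symm hne))
    linarith
  constructor
  · -- first inequality, blockwise
    rw [hsum]
    apply Finset.sum_le_sum
    intro w _
    have key1 : ∑ p ∈ P w, μ p * Real.log (μ p / μdag p)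
        ≤ ∑ p ∈ P w, μ p * ((μ p - μdag p) / μdag p) := by
      apply Finset.sum_le_sum
      intro p _
      rcases eq_or_lt_of_le (hμ0 p) with h0 | hpos
      · simp [← h0]
      · have hν : 0 < μdag p := hsupp p hpos
        have hlog : Real.log (μ p / μdag p) ≤ μ p / μdag p - 1 :=
          Real.log_le_sub_one_of_pos (div_pos hpos hν)
        have : μ p / μdag p - 1 = (μ p - μdag p) / μdag p := by
          field_simp
        rw [← this]
        exact mul_le_mul_of_nonneg_left hlog (le_of_lt hpos)
    have key2 : ∑ p ∈ P w, μ p * ((μ p - μdag p) / μdag p)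
        = ∑ p ∈ P w, (μ p - μdag p) ^ 2 / μdag p := by
      have : ∑ p ∈ P w, (μ p - μdag p) = 0 := by
        rw [Finset.sum_sub_distrib, hμm w, hνm w, sub_self]
      have expand : ∀ p ∈ P w,
          μ p * ((μ p - μdag p) / μdag p)
            = (μ p - μdag p) ^ 2 / μdag p + (μ p - μdag p) := by
        intro p _
        rcases eq_or_lt_of_le (hν0 p) with h0 | hpos
        · have hz := hzero p (le_of_eq h0.symm)
          simp [← h0, hz]
        · field_simp
          ring
      rw [Finset.sum_congr rfl expand, Finset.sum_add_distrib, this, add_zero]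
    have key3 : ∑ p ∈ P w, (μ p - μdag p) ^ 2 / μdag p
        ≤ ∑ p ∈ P w, (μ p - μdag p) ^ 2 / γw w := by
      apply Finset.sum_le_sum
      intro p hp
      rcases eq_or_lt_of_le (hν0 p) with h0 | hpos
      · have hz := hzero p (le_of_eq h0.symm)
        simp [← h0, hz]
      · exact div_le_div_of_nonneg_left (sq_nonneg _) (hγwpos w) (hγwle w p hp hpos)
    have key4 : ∑ p ∈ P w, (μ p - μdag p) ^ 2 / γw w
        ≤ (∑ p ∈ P w, |μ p - μdag p|) ^ 2 / γw w := by
      rw [← Finset.sum_div]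
      apply div_le_div_of_nonneg_right _ (hγwpos w).le
      calc ∑ p ∈ P w, (μ p - μdag p) ^ 2
          = ∑ p ∈ P w, |μ p - μdag p| ^ 2 := by
            simp [sq_abs]
        _ ≤ (∑ p ∈ P w, |μ p - μdag p|) ^ 2 :=
            Finset.sum_sq_le_sq_sum_of_nonneg fun p _ => abs_nonneg _
    linarith [key1, key2.le, key3, key4]
  · -- second inequality
    have hblock : ∀ w, (∑ p ∈ P w, |μ p - μdag p|) ^ 2 / γw w
        ≤ 4 * m w ^ 2 / γ := by
      intro w
      have hl1 : ∑ p ∈ P w, |μ p - μdag p| ≤ 2 * m w := by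
        calc ∑ p ∈ P w, |μ p - μdag p|
            ≤ ∑ p ∈ P w, (μ p + μdag p) := by
              apply Finset.sum_le_sum
              intro p _
              calc |μ p - μdag p| ≤ |μ p| + |μdag p| := abs_sub _ _
                _ = μ p + μdag p := by
                    rw [abs_of_nonneg (hμ0 p), abs_of_nonneg (hν0 p)]
          _ = 2 * m w := by
              rw [Finset.sum_add_distrib, hμm w, hνm w]; ring
      have hnn : 0 ≤ ∑ p ∈ P w, |μ p - μdag p| :=
        Finset.sum_nonneg fun p _ => abs_nonneg _
      have hsq : (∑ p ∈ P w, |μ p - μdag p|) ^ 2 ≤ 4 * m w ^ 2 := by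
        have := mul_self_le_mul_self hnn hl1
        nlinarith
      exact div_le_div₀ (by positivity) hsq hγpos (hγle w)
    calc ∑ w, (∑ p ∈ P w, |μ p - μdag p|) ^ 2 / γw w
        ≤ ∑ w, 4 * m w ^ 2 / γ := Finset.sum_le_sum fun w _ => hblock w
      _ = (4 * ∑ w, m w ^ 2) / γ := by
          rw [← Finset.sum_div, Finset.mul_sum]
      _ ≤ 4 * Mbar ^ 2 / γ := by
          apply div_le_div_of_nonneg_right _ hγpos.le
          have : ∑ w, m w ^ 2 ≤ (∑ w, m w) ^ 2 :=
            Finset.sum_sq_le_sq_sum_of_nonneg fun w _ => (hm w).le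
          rw [hMbar]
          linarith
end

section
/- Let Δ ⊆ ℝ^n be a nonempty convex set, let φ, Φ : ℝ^n → ℝ be convex and differentiable, and let A > 0, B ≥ 0 be constants such that ‖∇φ(ν)‖² ≤ A φ(ν) + B and ‖∇Φ(ν)‖² ≤ A Φ(ν) + B for all ν ∈ Δ. Let μ* ∈ Δ and set φ* = φ(μ*), Φ* = Φ(μ*), assuming A φ* + B ≥ 0 and A Φ* + B ≥ 0. Then for every μ ∈ Δ: |⟨μ* − μ, ∇φ(μ) − ∇Φ(μ)⟩| ≤ (4A² + 1) ‖μ − μ*‖² + 2A (φ* + Φ*) + 4B. -/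
set_option maxHeartbeats 800000

open scoped RealInnerProductSpace

lemma grad_convex_ineq {n : ℕ} (φ : EuclideanSpace ℝ (Fin n) → ℝ)
    (hconv : ConvexOn ℝ Set.univ φ) (x y g : EuclideanSpace ℝ (Fin n))
    (hg : HasGradientAt φ g x) : ⟪g, y - x⟫ ≤ φ y - φ x := by
  set L : ℝ →ᵃ[ℝ] EuclideanSpace ℝ (Fin n) := AffineMap.lineMap x y with hL
  have hLconv : ConvexOn ℝ (L ⁻¹' Set.univ) (φ ∘ L) := hconv.comp_affineMap L
  have hline : HasDerivAt (fun t : ℝ => L t) (y - x) 0 := by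
    have : (fun t : ℝ => L t) = fun t : ℝ => t • (y - x) + x := by
      funext t; simp [hL, AffineMap.lineMap_apply]
    rw [this]
    simpa using (hasDerivAt_id (0:ℝ)).smul_const (y - x) |>.add_const x
  have hL0 : L 0 = x := by simp [hL]
  have hL1 : L 1 = y := by simp [hL]
  have hderiv : HasDerivAt (φ ∘ L) ⟪g, y - x⟫ 0 := by
    have hfd : HasFDerivAt φ (InnerProductSpace.toDual ℝ _ g) x := hg.hasFDerivAt
    rw [← hL0] at hfd
    have := hfd.comp_hasDerivAt 0 hline
    simpa [InnerProductSpace.toDual_apply_apply] using this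
  have := hLconv.le_slope_of_hasDerivAt (by simp) (by simp) one_pos hderiv
  simpa [slope, hL0, hL1] using this

/-- Increment-magnitude bound from the proof of Proposition 1 of the paper:
for convex differentiable `φ, Φ` satisfying the linear growth condition
`‖∇·‖² ≤ A(·) + B` on `Δ`, and `μ* ∈ Δ` with `φ* = φ(μ*)`, `Φ* = Φ(μ*)`,
`|⟨μ* − μ, ∇φ(μ) − ∇Φ(μ)⟩| ≤ (4A² + 1)‖μ − μ*‖² + 2A(φ* + Φ*) + 4B`. -/
theorem increment_magnitude_bound
    {n : ℕ}
    (Δ : Set (EuclideanSpace ℝ (Fin n)))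
    (hΔne : Δ.Nonempty) (hΔconv : Convex ℝ Δ)
    (φ Φ : EuclideanSpace ℝ (Fin n) → ℝ)
    (gφ gΦ : EuclideanSpace ℝ (Fin n) → EuclideanSpace ℝ (Fin n))
    (hφconv : ConvexOn ℝ Set.univ φ)
    (hΦconv : ConvexOn ℝ Set.univ Φ)
    (hφgrad : ∀ x, HasGradientAt φ (gφ x) x)
    (hΦgrad : ∀ x, HasGradientAt Φ (gΦ x) x)
    (A B : ℝ) (hA : 0 < A) (hB : 0 ≤ B)
    (hgrowthφ : ∀ ν ∈ Δ, ‖gφ ν‖ ^ 2 ≤ A * φ ν + B)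
    (hgrowthΦ : ∀ ν ∈ Δ, ‖gΦ ν‖ ^ 2 ≤ A * Φ ν + B)
    (μstar : EuclideanSpace ℝ (Fin n)) (hμstar : μstar ∈ Δ)
    (φstar Φstar : ℝ) (hφstar : φstar = φ μstar) (hΦstar : Φstar = Φ μstar)
    (hφpos : 0 ≤ A * φstar + B) (hΦpos : 0 ≤ A * Φstar + B) :
    ∀ μ ∈ Δ,
      |⟪μstar - μ, gφ μ - gΦ μ⟫| ≤
        (4 * A ^ 2 + 1) * ‖μ - μstar‖ ^ 2 + 2 * A * (φstar + Φstar) + 4 * B := by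
  intro μ hμ
  set r : ℝ := ‖μ - μstar‖ with hr
  have hr0 : 0 ≤ r := norm_nonneg _
  -- convexity inequalities: φ μstar ≥ φ μ + ⟪gφ μ, μstar - μ⟫
  have hcφ : ⟪gφ μ, μstar - μ⟫ ≤ φ μstar - φ μ := grad_convex_ineq φ hφconv μ μstar _ (hφgrad μ)
  have hcΦ : ⟪gΦ μ, μstar - μ⟫ ≤ Φ μstar - Φ μ := grad_convex_ineq Φ hΦconv μ μstar _ (hΦgrad μ)
  -- growth bounds at μ
  have hgφ : ‖gφ μ‖ ^ 2 ≤ A * φ μ + B := hgrowthφ μ hμ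
  have hgΦ : ‖gΦ μ‖ ^ 2 ≤ A * Φ μ + B := hgrowthΦ μ hμ
  -- Cauchy-Schwarz bounds
  have hcsφ : |⟪gφ μ, μstar - μ⟫| ≤ ‖gφ μ‖ * r := by
    rw [hr, ← norm_neg (μ - μstar), neg_sub]
    exact abs_real_inner_le_norm _ _
  have hcsΦ : |⟪gΦ μ, μstar - μ⟫| ≤ ‖gΦ μ‖ * r := by
    rw [hr, ← norm_neg (μ - μstar), neg_sub]
    exact abs_real_inner_le_norm _ _
  -- self bounded quadratics
  have keyφ : ‖gφ μ‖ ^ 2 ≤ A * ‖gφ μ‖ * r + (A * φstar + B) := by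
    have h1 : A * φ μ ≤ A * φstar + A * ⟪gφ μ, μ - μstar⟫ := by
      have h2 : ⟪gφ μ, μ - μstar⟫ = -⟪gφ μ, μstar - μ⟫ := by
        rw [← inner_neg_right]; congr 1; abel
      nlinarith [hcφ]
    have h3 : ⟪gφ μ, μ - μstar⟫ ≤ ‖gφ μ‖ * r := by
      calc ⟪gφ μ, μ - μstar⟫ ≤ |⟪gφ μ, μ - μstar⟫| := le_abs_self _
        _ ≤ ‖gφ μ‖ * r := by rw [hr]; exact abs_real_inner_le_norm _ _
    nlinarith
  have keyΦ : ‖gΦ μ‖ ^ 2 ≤ A * ‖gΦ μ‖ * r + (A * Φstar + B) := by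
    have h1 : A * Φ μ ≤ A * Φstar + A * ⟪gΦ μ, μ - μstar⟫ := by
      have h2 : ⟪gΦ μ, μ - μstar⟫ = -⟪gΦ μ, μstar - μ⟫ := by
        rw [← inner_neg_right]; congr 1; abel
      nlinarith [hcΦ]
    have h3 : ⟪gΦ μ, μ - μstar⟫ ≤ ‖gΦ μ‖ * r := by
      calc ⟪gΦ μ, μ - μstar⟫ ≤ |⟪gΦ μ, μ - μstar⟫| := le_abs_self _
        _ ≤ ‖gΦ μ‖ * r := by rw [hr]; exact abs_real_inner_le_norm _ _
    nlinarith
  -- scalar fact: g² ≤ A g r + C, C ≥ 0 ⟹ r g ≤ (2A² + 1/2) r² + 2C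
  have scalar : ∀ g C : ℝ, 0 ≤ g → 0 ≤ C → g ^ 2 ≤ A * g * r + C →
      r * g ≤ (2 * A ^ 2 + 1 / 2) * r ^ 2 + 2 * C := by
    intro g C hg hC hq
    nlinarith [sq_nonneg (g - A * r), sq_nonneg (r - 2 * g), sq_nonneg (A * r - 2 * g),
      sq_nonneg (g - 2 * A * r), sq_nonneg r, sq_nonneg g, mul_nonneg hr0 hg,
      sq_nonneg (2 * A * r - r), sq_nonneg (A * r + r - 2 * g)]
  have bφ := scalar ‖gφ μ‖ (A * φstar + B) (norm_nonneg _) hφpos keyφ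
  have bΦ := scalar ‖gΦ μ‖ (A * Φstar + B) (norm_nonneg _) hΦpos keyΦ
  -- main estimate
  have habs : |⟪μstar - μ, gφ μ - gΦ μ⟫| ≤ r * (‖gφ μ‖ + ‖gΦ μ‖) := by
    calc |⟪μstar - μ, gφ μ - gΦ μ⟫| ≤ ‖μstar - μ‖ * ‖gφ μ - gΦ μ‖ := abs_real_inner_le_norm _ _
      _ ≤ r * (‖gφ μ‖ + ‖gΦ μ‖) := by
          rw [hr, ← norm_neg (μ - μstar), neg_sub]
          exact mul_le_mul_of_nonneg_left (norm_sub_le _ _) (norm_nonneg _)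
  nlinarith [habs, bφ, bΦ]
end
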